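/- For integers a ≥ b ≥ 0 and a prime p ≥ 5, the binomial coefficient C(a*p, b*p) is congruent to C(a, b) modulo p^2 (Babbage's theorem). -/

import Mathlib

open Polynomial

private lemma babbage_exists_E (p : ℕ) (hp : p.Prime) :
    ∃ E : ℤ[X], (X + 1) ^ p = X ^ p + 1 + (p : ℤ[X]) * E ∧
      ∀ k, p ∣ k → E.coeff k = 0 := by
  set D : ℤ[X] := (X + 1) ^ p - X ^ p - 1 with hD
  have hDk : ∀ k, D.coeff k = (p.choose k : ℤ)
      - (if k = p then 1 else 0) - (if k = 0 then 1 else 0) := by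
    intro k
    simp [hD, coeff_X_add_one_pow, coeff_X_pow, coeff_one]
  have hdvd : (C (p : ℤ)) ∣ D := by
    rw [C_dvd_iff_dvd_coeff]
    intro k
    rw [hDk k]
    rcases eq_or_ne k 0 with rfl | hk0
    · simp [hp.ne_zero, eq_comm]
    rcases lt_trichotomy k p with hkp | rfl | hkp
    · have h1 : (p : ℤ) ∣ (p.choose k : ℤ) := by
        exact_mod_cast hp.dvd_choose_self hk0 hkp
      simpa [hkp.ne, hk0] using h1
    · simp [hk0]
    · simp [Nat.choose_eq_zero_of_lt hkp, hkp.ne', hk0]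
  obtain ⟨E, hE⟩ := hdvd
  refine ⟨E, ?_, ?_⟩
  · have : (p : ℤ[X]) = C (p : ℤ) := by simp
    rw [this, ← hE, hD]; ring
  · intro k hk
    have h0 : D.coeff k = 0 := by
      rw [hDk k]
      rcases eq_or_ne k 0 with rfl | hk0
      · simp [hp.ne_zero, eq_comm]
      rcases eq_or_ne k p with rfl | hkp
      · simp [hk0]
      · have hkgt : p < k := lt_of_le_of_ne (Nat.le_of_dvd (Nat.pos_of_ne_zero hk0) hk)
          (Ne.symm hkp)
        simp [Nat.choose_eq_zero_of_lt hkgt, hkgt.ne', hk0]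
    have := congrArg (fun f => Polynomial.coeff f k) hE
    simp only [h0, coeff_C_mul] at this
    have hp0 : (p : ℤ) ≠ 0 := by exact_mod_cast hp.ne_zero
    exact (mul_eq_zero.mp this.symm).resolve_left hp0

private lemma babbage_pow_approx {R : Type*} [CommRing R] (Y Z : R) :
    ∀ a : ℕ, ∃ g : R, (Y + Z) ^ (a + 1)
      = Y ^ (a + 1) + (a + 1 : ℕ) * Z * Y ^ a + Z ^ 2 * g := by
  intro a
  induction a with
  | zero => exact ⟨0, by ring⟩
  | succ a ih =>
    obtain ⟨g, hg⟩ := ih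
    refine ⟨(a + 1 : ℕ) * Y ^ a + g * (Y + Z), ?_⟩
    have : (Y + Z) ^ (a + 2) = (Y + Z) * (Y + Z) ^ (a + 1) := by ring
    rw [this, hg]
    push_cast
    ring

theorem babbage (p : ℕ) (hp : p.Prime) (hp5 : 5 ≤ p) (a b : ℕ) (hab : b ≤ a) :
    ((p : ℤ) ^ 2) ∣ ((Nat.choose (a * p) (b * p) : ℤ) - (Nat.choose a b : ℤ)) := by
  have hppos : 0 < p := hp.pos
  rcases Nat.eq_zero_or_pos a with rfl | ha
  · interval_cases b
    simp
  obtain ⟨a', rfl⟩ : ∃ a', a = a' + 1 := ⟨a - 1, (Nat.succ_pred_eq_of_pos ha).symm⟩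
  obtain ⟨E, hEeq, hEco⟩ := babbage_exists_E p hp
  set Y : ℤ[X] := X ^ p + 1 with hY
  set Z : ℤ[X] := (p : ℤ[X]) * E with hZ
  obtain ⟨g, hg⟩ := babbage_pow_approx Y Z a'
  have hmain : (X + 1 : ℤ[X]) ^ ((a' + 1) * p)
      = Y ^ (a' + 1) + (a' + 1 : ℕ) * Z * Y ^ a' + Z ^ 2 * g := by
    rw [mul_comm, pow_mul, hEeq]; exact hg
  -- expand identities
  have hYexp : ∀ n : ℕ, Y ^ n = expand ℤ p ((X + 1) ^ n) := by
    intro n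
    rw [map_pow, map_add, expand_X, map_one, hY]
  have hYcoeff : ∀ n : ℕ, (Y ^ n).coeff (b * p) = (n.choose b : ℤ) := by
    intro n
    rw [hYexp, coeff_expand hppos]
    simp [Nat.mul_div_cancel _ hppos, coeff_X_add_one_pow]
  have hEYcoeff : (E * Y ^ a').coeff (b * p) = 0 := by
    rw [coeff_mul]
    apply Finset.sum_eq_zero
    rintro ⟨i, j⟩ hij
    rw [Finset.HasAntidiagonal.mem_antidiagonal] at hij
    by_cases hj : p ∣ j
    · have h1 : p ∣ i + j := by rw [hij]; exact dvd_mul_left p b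
      have hi : p ∣ i := (Nat.dvd_add_iff_left hj).mpr h1
      simp [hEco i hi]
    · rw [hYexp, coeff_expand hppos]
      simp [hj]
  have := congrArg (fun f : ℤ[X] => f.coeff (b * p)) hmain
  simp only [coeff_X_add_one_pow, coeff_add] at this
  have h2 : ((a' + 1 : ℕ) * Z * Y ^ a' : ℤ[X]).coeff (b * p) = 0 := by
    have : ((a' + 1 : ℕ) * Z * Y ^ a' : ℤ[X])
        = C (((a' + 1) * p : ℕ) : ℤ) * (E * Y ^ a') := by
      rw [hZ, map_natCast]; push_cast; ring
    rw [this, coeff_C_mul, hEYcoeff, mul_zero]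
  have h3 : (Z ^ 2 * g : ℤ[X]).coeff (b * p) = (p : ℤ) ^ 2 * (E ^ 2 * g).coeff (b * p) := by
    have : (Z ^ 2 * g : ℤ[X]) = C ((p : ℤ) ^ 2) * (E ^ 2 * g) := by
      rw [hZ, map_pow, map_natCast]; ring
    rw [this, coeff_C_mul]
  rw [hYcoeff, h2, h3, add_zero] at this
  rw [this]
  exact ⟨(E ^ 2 * g).coeff (b * p), by ring⟩
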